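/- Let s > 0 and λ > 0, let u be admissible, set F̃ := ∂_t u + Δu and w(x,t) := e^{sφ(t)} u(x,t). Then ∫_Q |∂_t w|² dx dt + ∫_Q sλ²φ |w|² dx dt + ∫_{ℝ^d} ( sλ|w(x,0)|² + |∇w(x,0)|² ) dx ≤ ∫_Q |F̃|² e^{2sφ} dx dt + ∫_{ℝ^d} ( sλφ(T)|w(x,T)|² + |∇w(x,T)|² ) dx. -/

import Mathlib

open MeasureTheory Real Set

noncomputable section

/-- Spatial partial derivative of `f` in the `i`-th coordinate direction. -/
def spd {d : ℕ} (i : Fin d) (f : (Fin d → ℝ) → ℝ) (x : Fin d → ℝ) : ℝ :=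
  fderiv ℝ f x (Pi.single i 1)

/-- Time derivative `∂_t u`. -/
def tder {d : ℕ} (u : (Fin d → ℝ) → ℝ → ℝ) (x : Fin d → ℝ) (t : ℝ) : ℝ :=
  deriv (u x) t

/-- Squared norm of the spatial gradient, `|∇u|²`. -/
def grad2 {d : ℕ} (u : (Fin d → ℝ) → ℝ → ℝ) (x : Fin d → ℝ) (t : ℝ) : ℝ :=
  ∑ i : Fin d, (spd i (fun y => u y t) x) ^ 2

/-- Norm of the spatial gradient, `|∇u|`. -/
def gradNorm {d : ℕ} (u : (Fin d → ℝ) → ℝ → ℝ) (x : Fin d → ℝ) (t : ℝ) : ℝ :=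
  Real.sqrt (grad2 u x t)

/-- Second spatial partial derivative `∂_i ∂_j u`. -/
def pdij {d : ℕ} (i j : Fin d) (u : (Fin d → ℝ) → ℝ → ℝ) (x : Fin d → ℝ) (t : ℝ) : ℝ :=
  spd i (fun y => spd j (fun z => u z t) y) x

/-- Spatial Laplacian `Δu`. -/
def lap {d : ℕ} (u : (Fin d → ℝ) → ℝ → ℝ) (x : Fin d → ℝ) (t : ℝ) : ℝ :=
  ∑ i : Fin d, pdij i i u x t

/-- `Σ_{i,j=1}^d |∂_i∂_j u|²`. -/
def hess2 {d : ℕ} (u : (Fin d → ℝ) → ℝ → ℝ) (x : Fin d → ℝ) (t : ℝ) : ℝ :=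
  ∑ i : Fin d, ∑ j : Fin d, (pdij i j u x t) ^ 2

/-- `u : ℝ^d × ℝ → ℝ` is admissible: `C^∞` and spatially compactly supported,
uniformly for `t ∈ [0,T]`. -/
def Admissible {d : ℕ} (T : ℝ) (u : (Fin d → ℝ) → ℝ → ℝ) : Prop :=
  ContDiff ℝ (⊤ : ℕ∞) (fun p : (Fin d → ℝ) × ℝ => u p.1 p.2) ∧
  ∃ K₀ : Set (Fin d → ℝ), IsCompact K₀ ∧
    ∀ x t, x ∉ K₀ → t ∈ Set.Icc (0 : ℝ) T → u x t = 0

end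

noncomputable section EnergyAux
namespace EnergyAux
variable {E : Type*} [NormedAddCommGroup E] [NormedSpace ℝ E]

/-- Directional derivative as a function. -/
def Dd (v : E) (f : E → ℝ) : E → ℝ := fun p => fderiv ℝ f p v

lemma contDiff_Dd {f : E → ℝ} (hf : ContDiff ℝ (⊤ : ℕ∞) f) (v : E) :
    ContDiff ℝ (⊤ : ℕ∞) (Dd v f) :=
  (hf.fderiv_right (m := (⊤ : ℕ∞)) (mod_cast le_top)).clm_apply contDiff_const

lemma diff_Dd {f : E → ℝ} (hf : ContDiff ℝ (⊤ : ℕ∞) f) (v : E) :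
    Differentiable ℝ (Dd v f) :=
  (contDiff_Dd hf v).differentiable (by simp)

lemma Dd_comm {f : E → ℝ} (hf : ContDiff ℝ (⊤ : ℕ∞) f) (v₁ v₂ : E) (p : E) :
    Dd v₂ (Dd v₁ f) p = Dd v₁ (Dd v₂ f) p := by
  have hdf : ∀ y, HasFDerivAt f (fderiv ℝ f y) y :=
    fun y => (hf.differentiable (by simp) y).hasFDerivAt
  have hd2 : HasFDerivAt (fderiv ℝ f) (fderiv ℝ (fderiv ℝ f) p) p :=
    ((hf.fderiv_right (m := (⊤ : ℕ∞)) (mod_cast le_top)).differentiable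
      (by simp) p).hasFDerivAt
  have hsym := second_derivative_symmetric hdf hd2 v₁ v₂
  have key : ∀ v w : E, Dd w (Dd v f) p = fderiv ℝ (fderiv ℝ f) p w v := by
    intro v w
    have h1 : HasFDerivAt (fun q => fderiv ℝ f q v)
        ((ContinuousLinearMap.apply ℝ ℝ v).comp (fderiv ℝ (fderiv ℝ f) p)) p :=
      (ContinuousLinearMap.apply ℝ ℝ v).hasFDerivAt.comp p hd2
    have h2 : fderiv ℝ (Dd v f) p
        = (ContinuousLinearMap.apply ℝ ℝ v).comp (fderiv ℝ (fderiv ℝ f) p) := h1.fderiv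
    simp [Dd, h2]
  rw [key, key, hsym]

variable {d : ℕ}

lemma hasDerivAt_slice_t {f : ((Fin d → ℝ) × ℝ) → ℝ} {x : Fin d → ℝ} {t : ℝ}
    (hf : DifferentiableAt ℝ f (x, t)) :
    HasDerivAt (fun τ => f (x, τ)) (fderiv ℝ f (x, t) (0, 1)) t := by
  have h1 : HasDerivAt (fun τ : ℝ => ((x : Fin d → ℝ), τ)) ((0 : Fin d → ℝ), (1 : ℝ)) t :=
    HasDerivAt.prodMk (hasDerivAt_const t x) (hasDerivAt_id t)
  exact hf.hasFDerivAt.comp_hasDerivAt t h1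

lemma tder_slice {f : ((Fin d → ℝ) × ℝ) → ℝ} {x : Fin d → ℝ} {t : ℝ}
    (hf : DifferentiableAt ℝ f (x, t)) :
    tder (fun x t => f (x, t)) x t = fderiv ℝ f (x, t) (0, 1) :=
  (hasDerivAt_slice_t hf).deriv

lemma hasFDerivAt_slice_x {f : ((Fin d → ℝ) × ℝ) → ℝ} {x : Fin d → ℝ} {t : ℝ}
    (hf : DifferentiableAt ℝ f (x, t)) :
    HasFDerivAt (fun y => f (y, t))
      ((fderiv ℝ f (x, t)).comp ((ContinuousLinearMap.id ℝ (Fin d → ℝ)).prod 0)) x := by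
  have h1 : HasFDerivAt (fun y : Fin d → ℝ => (y, t))
      ((ContinuousLinearMap.id ℝ (Fin d → ℝ)).prod 0) x :=
    HasFDerivAt.prodMk (hasFDerivAt_id x) (hasFDerivAt_const t x)
  exact hf.hasFDerivAt.comp x h1

lemma spd_slice {f : ((Fin d → ℝ) × ℝ) → ℝ} {x : Fin d → ℝ} {t : ℝ}
    (hf : DifferentiableAt ℝ f (x, t)) (i : Fin d) :
    spd i (fun y => f (y, t)) x = fderiv ℝ f (x, t) (Pi.single i 1, 0) := by
  rw [spd, (hasFDerivAt_slice_x hf).fderiv]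
  simp

lemma diff_slice_x {f : ((Fin d → ℝ) × ℝ) → ℝ} (hf : ContDiff ℝ (⊤ : ℕ∞) f) (t : ℝ) :
    Differentiable ℝ (fun y => f (y, t)) :=
  (hf.comp (contDiff_id.prodMk contDiff_const)).differentiable (by simp)

lemma cont_slice_x {f : ((Fin d → ℝ) × ℝ) → ℝ} (hf : Continuous f) (t : ℝ) :
    Continuous (fun y => f (y, t)) :=
  hf.comp (continuous_id.prodMk continuous_const)

lemma cont_spd_slice {f : ((Fin d → ℝ) × ℝ) → ℝ} (hf : ContDiff ℝ (⊤ : ℕ∞) f)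
    (t : ℝ) (i : Fin d) : Continuous (fun x => spd i (fun y => f (y, t)) x) := by
  have : (fun x => spd i (fun y => f (y, t)) x)
      = fun x => Dd ((Pi.single i 1 : Fin d → ℝ), (0:ℝ)) f (x, t) := by
    funext x
    exact spd_slice (hf.differentiable (by simp) (x, t)) i
  rw [this]
  exact ((contDiff_Dd hf _).continuous).comp (continuous_id.prodMk continuous_const)

lemma spd_of_eventually_zero {g : (Fin d → ℝ) → ℝ} {x : Fin d → ℝ}
    (h : ∀ᶠ y in nhds x, g y = 0) (i : Fin d) : spd i g x = 0 := by
  have : fderiv ℝ g x = fderiv ℝ (fun _ : Fin d → ℝ => (0:ℝ)) x :=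
    Filter.EventuallyEq.fderiv_eq h
  rw [spd, this, fderiv_fun_const]
  simp

lemma spd_mul {f g : (Fin d → ℝ) → ℝ} {x : Fin d → ℝ}
    (hf : DifferentiableAt ℝ f x) (hg : DifferentiableAt ℝ g x) (i : Fin d) :
    spd i (fun y => f y * g y) x = spd i f x * g x + f x * spd i g x := by
  rw [spd, fderiv_fun_mul hf hg]
  simp [spd]; ring

lemma spd_const_mul {g : (Fin d → ℝ) → ℝ} {x : Fin d → ℝ} (c : ℝ)
    (hg : DifferentiableAt ℝ g x) (i : Fin d) :
    spd i (fun y => c * g y) x = c * spd i g x := by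
  rw [spd, fderiv_const_mul hg c]
  simp [spd]

lemma spd_sub {f g : (Fin d → ℝ) → ℝ} {x : Fin d → ℝ}
    (hf : DifferentiableAt ℝ f x) (hg : DifferentiableAt ℝ g x) (i : Fin d) :
    spd i (fun y => f y - g y) x = spd i f x - spd i g x := by
  rw [spd, fderiv_fun_sub hf hg]
  simp [spd]

lemma integrable_slice {g : (Fin d → ℝ) → ℝ} (hg : Continuous g) {K : Set (Fin d → ℝ)}
    (hK : IsCompact K) (h0 : ∀ x ∉ K, g x = 0) : Integrable g volume :=
  hg.integrable_of_hasCompactSupport (HasCompactSupport.intro hK h0)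

lemma ftc_Ioo {g g' : ℝ → ℝ} (hg : ∀ t, HasDerivAt g (g' t) t) (hg' : Continuous g')
    {T : ℝ} (hT : 0 < T) : ∫ t in Ioo (0:ℝ) T, g' t = g T - g 0 := by
  rw [← MeasureTheory.integral_Ioc_eq_integral_Ioo, ← intervalIntegral.integral_of_le hT.le]
  exact intervalIntegral.integral_eq_sub_of_hasDerivAt (fun t _ => hg t)
    (hg'.intervalIntegrable 0 T)

lemma fderiv_zero_of_zero_on_compl {g : (Fin d → ℝ) → ℝ} {K : Set (Fin d → ℝ)}
    (hK : IsCompact K) (h0 : ∀ x ∉ K, g x = 0) {x : Fin d → ℝ} (hx : x ∉ K) (v : Fin d → ℝ) :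
    fderiv ℝ g x v = 0 := by
  have hev : g =ᶠ[nhds x] (fun _ => (0:ℝ)) := by
    filter_upwards [hK.isClosed.isOpen_compl.mem_nhds hx] with y hy using h0 y hy
  rw [hev.fderiv_eq, fderiv_fun_const]
  simp

lemma integral_spd_eq_zero {g : (Fin d → ℝ) → ℝ} {K : Set (Fin d → ℝ)} (hK : IsCompact K)
    (hg : Differentiable ℝ g) (hgK : ∀ x ∉ K, g x = 0) {i : Fin d}
    (hg'c : Continuous (fun x => fderiv ℝ g x (Pi.single i 1))) :
    ∫ x : Fin d → ℝ, spd i g x = 0 := by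
  set v : Fin d → ℝ := Pi.single i 1 with hv
  have hgint : Integrable (fun x => g x * 1) volume := by
    simpa using integrable_slice hg.continuous hK hgK
  have hg'int : Integrable (fun x => fderiv ℝ g x v * 1) volume := by
    simp only [mul_one]
    exact integrable_slice hg'c hK (fun x hx => fderiv_zero_of_zero_on_compl hK hgK hx v)
  have h0 : Integrable (fun x => g x * fderiv ℝ (fun _ : Fin d → ℝ => (1:ℝ)) x v) volume := by
    simp [fderiv_fun_const]
  have key := integral_mul_fderiv_eq_neg_fderiv_mul_of_integrable (μ := volume)
    (f := g) (g := fun _ => (1:ℝ)) (v := v) hg'int h0 hgint (fun x _ => hg x) (fun x _ => differentiableAt_const (1:ℝ))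
  simp only [fderiv_fun_const, Pi.zero_apply, ContinuousLinearMap.zero_apply, mul_zero, mul_one,
    integral_zero] at key
  have : ∫ x : Fin d → ℝ, fderiv ℝ g x v = 0 := by linarith [key]
  simpa [spd, hv] using this

lemma integrable_prod_helper {T : ℝ} {f : ℝ × (Fin d → ℝ) → ℝ}
    (hf : Continuous f) {K : Set (Fin d → ℝ)} (hK : IsCompact K)
    (h0 : ∀ t ∈ Ioo (0:ℝ) T, ∀ x ∉ K, f (t, x) = 0) :
    Integrable f ((volume.restrict (Ioo (0:ℝ) T)).prod volume) := by
  have hmeas : (volume.restrict (Ioo (0:ℝ) T)).prod volume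
      = (volume.prod volume).restrict ((Ioo (0:ℝ) T) ×ˢ (univ : Set (Fin d → ℝ))) := by
    rw [← Measure.restrict_univ (μ := (volume : Measure (Fin d → ℝ))), Measure.prod_restrict,
      Measure.restrict_univ]
  rw [hmeas]
  have hsplit : (Ioo (0:ℝ) T) ×ˢ (univ : Set (Fin d → ℝ))
      = ((Ioo (0:ℝ) T ×ˢ (univ : Set (Fin d → ℝ))) ∩ (Icc 0 T ×ˢ K))
        ∪ ((Ioo (0:ℝ) T ×ˢ (univ : Set (Fin d → ℝ))) \ (Icc 0 T ×ˢ K)) := by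
    rw [inter_union_diff]
  have h1 : IntegrableOn f ((Ioo (0:ℝ) T ×ˢ (univ : Set (Fin d → ℝ))) ∩ (Icc 0 T ×ˢ K))
      (volume.prod volume) := by
    apply (hf.continuousOn.integrableOn_compact (isCompact_Icc.prod hK)).mono_set
    exact inter_subset_right
  have h2 : IntegrableOn f ((Ioo (0:ℝ) T ×ˢ (univ : Set (Fin d → ℝ))) \ (Icc 0 T ×ˢ K))
      (volume.prod volume) := by
    have hmeas2 : MeasurableSet ((Ioo (0:ℝ) T ×ˢ (univ : Set (Fin d → ℝ))) \ (Icc 0 T ×ˢ K)) :=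
      (measurableSet_Ioo.prod MeasurableSet.univ).diff
        (measurableSet_Icc.prod hK.measurableSet)
    apply (integrableOn_zero (μ := volume.prod volume)).congr_fun _ hmeas2
    rintro ⟨t, x⟩ ⟨⟨ht, -⟩, hn⟩
    have hx : x ∉ K := by
      intro hx
      exact hn ⟨Ioo_subset_Icc_self ht, hx⟩
    exact (h0 t ht x hx).symm
  rw [hsplit]
  exact h1.union h2

end EnergyAux
end EnergyAux

open EnergyAux

/-- The intermediate energy estimate (4.5) in the Second Step of the proof of
Theorem 2.1, for the conjugated function `w = e^{sφ} u`, `φ(t) = e^{λt}`. -/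
theorem energy_estimate_conjugated
    (d : ℕ) (hd : 1 ≤ d) (T : ℝ) (hT : 0 < T) (s lam : ℝ) (hs : 0 < s) (hlam : 0 < lam)
    (u : (Fin d → ℝ) → ℝ → ℝ) (hu : Admissible T u)
    (w : (Fin d → ℝ) → ℝ → ℝ)
    (hw : ∀ x t, w x t = Real.exp (s * Real.exp (lam * t)) * u x t) :
    (∫ t in Set.Ioo (0:ℝ) T, ∫ x : Fin d → ℝ, (tder w x t) ^ 2)
    + (∫ t in Set.Ioo (0:ℝ) T, ∫ x : Fin d → ℝ,
        s * lam ^ 2 * Real.exp (lam * t) * (w x t) ^ 2)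
    + (∫ x : Fin d → ℝ, (s * lam * (w x 0) ^ 2 + grad2 w x 0))
    ≤ (∫ t in Set.Ioo (0:ℝ) T, ∫ x : Fin d → ℝ,
        (tder u x t + lap u x t) ^ 2 * Real.exp (2 * s * Real.exp (lam * t)))
      + (∫ x : Fin d → ℝ,
          (s * lam * Real.exp (lam * T) * (w x T) ^ 2 + grad2 w x T)) := by
  classical
  obtain ⟨hu1, K₀, hK₀, hu0⟩ := hu
  -- ## The conjugated function and its directional derivatives
  set W : (Fin d → ℝ) × ℝ → ℝ := fun p => rexp (s * rexp (lam * p.2)) * u p.1 p.2 with hWdef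
  have hW : ContDiff ℝ (⊤ : ℕ∞) W :=
    ((contDiff_const.mul ((contDiff_const.mul contDiff_snd).exp)).exp).mul hu1
  set A : (Fin d → ℝ) × ℝ → ℝ := Dd ((0 : Fin d → ℝ), (1:ℝ)) W with hAdef
  set Bf : Fin d → ((Fin d → ℝ) × ℝ) → ℝ :=
    fun i => Dd ((Pi.single i 1 : Fin d → ℝ), (0:ℝ)) W with hBdef
  set Tf : Fin d → ((Fin d → ℝ) × ℝ) → ℝ :=
    fun i => Dd ((0 : Fin d → ℝ), (1:ℝ)) (Bf i) with hTdef
  set Avf : Fin d → ((Fin d → ℝ) × ℝ) → ℝ :=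
    fun i => Dd ((Pi.single i 1 : Fin d → ℝ), (0:ℝ)) A with hAvdef
  set Mf : Fin d → Fin d → ((Fin d → ℝ) × ℝ) → ℝ :=
    fun i j => Dd ((Pi.single i 1 : Fin d → ℝ), (0:ℝ)) (Bf j) with hMdef
  set Lf : ((Fin d → ℝ) × ℝ) → ℝ := fun p => ∑ i : Fin d, Mf i i p with hLdef
  set cc : ℝ → ℝ := fun t => s * lam * rexp (lam * t) with hccdef
  set q2 : ((Fin d → ℝ) × ℝ) → ℝ :=
    fun p => s * lam ^ 2 * rexp (lam * p.2) * (W p) ^ 2 with hq2def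
  set Bq : ((Fin d → ℝ) × ℝ) → ℝ :=
    fun p => (cc p.2 * W p) ^ 2 + (Lf p) ^ 2 + 2 * cc p.2 * ∑ i : Fin d, (Bf i p) ^ 2 with hBqdef
  set dG : ((Fin d → ℝ) × ℝ) → ℝ :=
    fun p => s * lam * (lam * rexp (lam * p.2)) * (W p) ^ 2 + cc p.2 * (2 * W p * A p)
      + ∑ i : Fin d, 2 * Bf i p * Tf i p with hdGdef
  set Vf : Fin d → ((Fin d → ℝ) × ℝ) → ℝ :=
    fun i p => 2 * A p * Bf i p - 2 * cc p.2 * (W p * Bf i p) with hVdef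
  set DV : Fin d → ((Fin d → ℝ) × ℝ) → ℝ :=
    fun i p => 2 * (Avf i p * Bf i p + A p * Mf i i p)
      - 2 * cc p.2 * ((Bf i p) ^ 2 + W p * Mf i i p) with hDVdef
  set F2 : ((Fin d → ℝ) × ℝ) → ℝ := fun p => (A p - cc p.2 * W p + Lf p) ^ 2 with hF2def
  set GW : ((Fin d → ℝ) × ℝ) → ℝ :=
    fun p => s * lam * rexp (lam * p.2) * (W p) ^ 2 + ∑ i : Fin d, (Bf i p) ^ 2 with hGWdef
  -- ## Smoothness
  have hA : ContDiff ℝ (⊤ : ℕ∞) A := contDiff_Dd hW _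
  have hBf : ∀ i, ContDiff ℝ (⊤ : ℕ∞) (Bf i) := fun i => contDiff_Dd hW _
  have hTf : ∀ i, ContDiff ℝ (⊤ : ℕ∞) (Tf i) := fun i => contDiff_Dd (hBf i) _
  have hAvf : ∀ i, ContDiff ℝ (⊤ : ℕ∞) (Avf i) := fun i => contDiff_Dd hA _
  have hMf : ∀ i j, ContDiff ℝ (⊤ : ℕ∞) (Mf i j) := fun i j => contDiff_Dd (hBf j) _
  have hLf : ContDiff ℝ (⊤ : ℕ∞) Lf := ContDiff.sum fun i _ => hMf i i
  have hccS : ContDiff ℝ (⊤ : ℕ∞) (fun p : (Fin d → ℝ) × ℝ => cc p.2) :=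
    contDiff_const.mul ((contDiff_const.mul contDiff_snd).exp)
  have hVf : ∀ i, ContDiff ℝ (⊤ : ℕ∞) (Vf i) := fun i =>
    ((contDiff_const.mul hA).mul (hBf i)).sub
      ((contDiff_const.mul hccS).mul (hW.mul (hBf i)))
  -- ## Bridges between `w`-quantities and `W`-quantities
  have lw : ∀ x t, w x t = W (x, t) := fun x t => hw x t
  have lwfun : ∀ x, w x = fun t => W (x, t) := fun x => funext fun t => lw x t
  have l1 : ∀ x t, tder w x t = A (x, t) := by
    intro x t
    rw [tder, lwfun x]
    exact (hasDerivAt_slice_t (hW.differentiable (by simp) (x, t))).deriv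
  have l2 : ∀ i x t, spd i (fun y => w y t) x = Bf i (x, t) := by
    intro i x t
    have : (fun y => w y t) = fun y => W (y, t) := funext fun y => lw y t
    rw [this]
    exact spd_slice (hW.differentiable (by simp) (x, t)) i
  have l3 : ∀ x t, grad2 w x t = ∑ i : Fin d, (Bf i (x, t)) ^ 2 := by
    intro x t
    exact Finset.sum_congr rfl fun i _ => by rw [l2 i x t]
  have huslice : ∀ t : ℝ, ContDiff ℝ (⊤ : ℕ∞) (fun z : Fin d → ℝ => u z t) :=
    fun t => hu1.comp (contDiff_id.prodMk contDiff_const)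
  have l5 : ∀ x t, (tder u x t + lap u x t) ^ 2 * rexp (2 * s * rexp (lam * t)) = F2 (x, t) := by
    intro x t
    -- time derivative of `u`
    have hDu : HasDerivAt (u x) (tder u x t) t := by
      have : DifferentiableAt ℝ (u x) t :=
        (hasDerivAt_slice_t (f := fun p : (Fin d → ℝ) × ℝ => u p.1 p.2)
          (hu1.differentiable (by simp) (x, t))).differentiableAt
      exact this.hasDerivAt
    -- derivative of the exponential factor
    have hexp : HasDerivAt (fun τ => rexp (s * rexp (lam * τ)))
        (cc t * rexp (s * rexp (lam * t))) t := by
      have h1 : HasDerivAt (fun τ : ℝ => lam * τ) lam t := by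
        simpa using (hasDerivAt_id t).const_mul lam
      have h3 := ((h1.exp.const_mul s).exp)
      convert h3 using 1
      simp only [hccdef]
      ring
    -- `A = cc * W + e * ∂ₜu`
    have hAeq : A (x, t) = cc t * W (x, t) + rexp (s * rexp (lam * t)) * tder u x t := by
      have hslice : HasDerivAt (fun τ => W (x, τ)) (A (x, t)) t :=
        hasDerivAt_slice_t (hW.differentiable (by simp) (x, t))
      have hprod : HasDerivAt (fun τ => rexp (s * rexp (lam * τ)) * u x τ)
          (cc t * rexp (s * rexp (lam * t)) * u x t
            + rexp (s * rexp (lam * t)) * tder u x t) t := hexp.mul hDu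
      have := hslice.unique hprod
      rw [this]
      show _ = cc t * (rexp (s * rexp (lam * t)) * u x t) + _
      ring
    -- spatial derivatives
    have hB : ∀ (i : Fin d) (y : Fin d → ℝ),
        Bf i (y, t) = rexp (s * rexp (lam * t)) * spd i (fun z => u z t) y := by
      intro i y
      have h1 : Bf i (y, t) = spd i (fun z => W (z, t)) y :=
        (spd_slice (hW.differentiable (by simp) (y, t)) i).symm
      have h2 : (fun z => W (z, t)) = fun z => rexp (s * rexp (lam * t)) * u z t := rfl
      rw [h1, h2, spd_const_mul _ ((huslice t).differentiable (by simp) y) i]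
    have hLap : Lf (x, t) = rexp (s * rexp (lam * t)) * lap u x t := by
      have hM : ∀ i : Fin d, Mf i i (x, t) = rexp (s * rexp (lam * t)) * pdij i i u x t := by
        intro i
        have h1 : Mf i i (x, t) = spd i (fun y => Bf i (y, t)) x :=
          (spd_slice ((hBf i).differentiable (by simp) (x, t)) i).symm
        have h2 : (fun y => Bf i (y, t))
            = fun y => rexp (s * rexp (lam * t)) * spd i (fun z => u z t) y :=
          funext fun y => hB i y
        have hdiffspd : DifferentiableAt ℝ (fun y => spd i (fun z => u z t) y) x :=
          diff_Dd (huslice t) (Pi.single i 1) x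
        rw [h1, h2, spd_const_mul _ hdiffspd i]
        rfl
      show (∑ i : Fin d, Mf i i (x, t)) = _
      rw [lap, Finset.mul_sum]
      exact Finset.sum_congr rfl fun i _ => hM i
    have hE : rexp (2 * s * rexp (lam * t)) = rexp (s * rexp (lam * t)) ^ 2 := by
      rw [sq, ← Real.exp_add]
      congr 1
      ring
    show _ = (A (x, t) - cc t * W (x, t) + Lf (x, t)) ^ 2
    rw [hAeq, hLap, hE]
    ring
  -- ## Divergence term pointwise
  have hVspd : ∀ (i : Fin d) (x : Fin d → ℝ) (t : ℝ),
      spd i (fun y => Vf i (y, t)) x = DV i (x, t) := by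
    intro i x t
    have dA : DifferentiableAt ℝ (fun y => A (y, t)) x := diff_slice_x hA t x
    have dB : DifferentiableAt ℝ (fun y => Bf i (y, t)) x := diff_slice_x (hBf i) t x
    have dW : DifferentiableAt ℝ (fun y => W (y, t)) x := diff_slice_x hW t x
    have sA : spd i (fun y => A (y, t)) x = Avf i (x, t) :=
      spd_slice (hA.differentiable (by simp) (x, t)) i
    have sB : spd i (fun y => Bf i (y, t)) x = Mf i i (x, t) :=
      spd_slice ((hBf i).differentiable (by simp) (x, t)) i
    have sW : spd i (fun y => W (y, t)) x = Bf i (x, t) :=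
      spd_slice (hW.differentiable (by simp) (x, t)) i
    have hfe : (fun y => Vf i (y, t))
        = fun y => (2 * A (y, t) * Bf i (y, t)) - (2 * cc t * (W (y, t) * Bf i (y, t))) := rfl
    rw [hfe, spd_sub (f := fun y => 2 * A (y, t) * Bf i (y, t))
        (g := fun y => 2 * cc t * (W (y, t) * Bf i (y, t))) ((dA.const_mul 2).mul dB) (((dW.mul dB)).const_mul (2 * cc t)) i,
      spd_mul (f := fun y => 2 * A (y, t)) (g := fun y => Bf i (y, t)) (dA.const_mul 2) dB i, spd_const_mul 2 dA i,
      spd_const_mul (g := fun y => W (y, t) * Bf i (y, t)) (2 * cc t) (dW.mul dB) i, spd_mul dW dB i, sA, sB, sW]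
    simp only [hDVdef]
    ring
  -- ## Pointwise identity
  have PI : ∀ x t, F2 (x, t) = (A (x, t)) ^ 2 + q2 (x, t) + Bq (x, t) - dG (x, t)
      + ∑ i : Fin d, spd i (fun y => Vf i (y, t)) x := by
    intro x t
    have hTA : ∀ i : Fin d, Tf i (x, t) = Avf i (x, t) :=
      fun i => Dd_comm hW ((Pi.single i 1 : Fin d → ℝ), (0:ℝ)) ((0 : Fin d → ℝ), (1:ℝ)) (x, t)
    have hdv : ∑ i : Fin d, spd i (fun y => Vf i (y, t)) x
        = 2 * (∑ i : Fin d, Avf i (x, t) * Bf i (x, t))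
          + 2 * A (x, t) * (∑ i : Fin d, Mf i i (x, t))
          - 2 * cc t * (∑ i : Fin d, (Bf i (x, t)) ^ 2)
          - 2 * (cc t * W (x, t)) * (∑ i : Fin d, Mf i i (x, t)) := by
      rw [Finset.mul_sum, Finset.mul_sum, Finset.mul_sum, Finset.mul_sum,
        ← Finset.sum_add_distrib, ← Finset.sum_sub_distrib, ← Finset.sum_sub_distrib]
      refine Finset.sum_congr rfl fun i _ => ?_
      rw [hVspd i x t]
      simp only [hDVdef]
      ring
    have h2 : ∑ i : Fin d, 2 * Bf i (x, t) * Tf i (x, t)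
        = 2 * (∑ i : Fin d, Avf i (x, t) * Bf i (x, t)) := by
      rw [Finset.mul_sum]
      exact Finset.sum_congr rfl fun i _ => by rw [hTA i]; ring
    rw [hdv]
    simp only [hF2def, hq2def, hBqdef, hdGdef, hLdef]
    rw [h2]
    ring
  -- ## Support properties
  have hZW : ∀ t ∈ Icc (0:ℝ) T, ∀ x, x ∉ K₀ → W (x, t) = 0 := by
    intro t ht x hx
    simp [hWdef, hu0 x t hx ht]
  have hZD : ∀ f : ((Fin d → ℝ) × ℝ) → ℝ,
      (∀ t ∈ Ioo (0:ℝ) T, ∀ x, x ∉ K₀ → f (x, t) = 0) →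
      ∀ v, ∀ t ∈ Ioo (0:ℝ) T, ∀ x, x ∉ K₀ → Dd v f (x, t) = 0 := by
    intro f hf v t ht x hx
    have hopen : IsOpen ((K₀ᶜ : Set (Fin d → ℝ)) ×ˢ Ioo (0:ℝ) T) :=
      (hK₀.isClosed.isOpen_compl).prod isOpen_Ioo
    have hev : f =ᶠ[nhds (x, t)] (fun _ => (0:ℝ)) := by
      filter_upwards [hopen.mem_nhds (by exact ⟨hx, ht⟩)] with q hq
      exact hf q.2 hq.2 q.1 hq.1
    show fderiv ℝ f (x, t) v = 0
    rw [hev.fderiv_eq, fderiv_fun_const]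
    simp
  have hZW' : ∀ t ∈ Ioo (0:ℝ) T, ∀ x, x ∉ K₀ → W (x, t) = 0 :=
    fun t ht x hx => hZW t (Ioo_subset_Icc_self ht) x hx
  have hZA : ∀ t ∈ Ioo (0:ℝ) T, ∀ x, x ∉ K₀ → A (x, t) = 0 := hZD W hZW' _
  have hZB : ∀ i, ∀ t ∈ Ioo (0:ℝ) T, ∀ x, x ∉ K₀ → Bf i (x, t) = 0 := fun i => hZD W hZW' _
  have hZT : ∀ i, ∀ t ∈ Ioo (0:ℝ) T, ∀ x, x ∉ K₀ → Tf i (x, t) = 0 :=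
    fun i => hZD (Bf i) (hZB i) _
  have hZAv : ∀ i, ∀ t ∈ Ioo (0:ℝ) T, ∀ x, x ∉ K₀ → Avf i (x, t) = 0 := fun i => hZD A hZA _
  have hZM : ∀ i j, ∀ t ∈ Ioo (0:ℝ) T, ∀ x, x ∉ K₀ → Mf i j (x, t) = 0 :=
    fun i j => hZD (Bf j) (hZB j) _
  have hZL : ∀ t ∈ Ioo (0:ℝ) T, ∀ x, x ∉ K₀ → Lf (x, t) = 0 := by
    intro t ht x hx
    exact Finset.sum_eq_zero fun i _ => hZM i i t ht x hx
  have hZBIcc : ∀ i, ∀ t ∈ Icc (0:ℝ) T, ∀ x, x ∉ K₀ → Bf i (x, t) = 0 := by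
    intro i t ht x hx
    have : Bf i (x, t) = spd i (fun y => W (y, t)) x :=
      (spd_slice (hW.differentiable (by simp) (x, t)) i).symm
    rw [this]
    apply spd_of_eventually_zero _ i
    filter_upwards [hK₀.isClosed.isOpen_compl.mem_nhds hx] with y hy
    exact hZW t ht y hy
  -- ## Continuity
  have hWc : Continuous W := hW.continuous
  have hAc : Continuous A := hA.continuous
  have hBc : ∀ i, Continuous (Bf i) := fun i => (hBf i).continuous
  have hTc : ∀ i, Continuous (Tf i) := fun i => (hTf i).continuous
  have hMc : ∀ i j, Continuous (Mf i j) := fun i j => (hMf i j).continuous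
  have hLc : Continuous Lf := hLf.continuous
  have hccc : Continuous cc := continuous_const.mul ((continuous_const.mul continuous_id).rexp)
  have hq2c : Continuous q2 := hq2def ▸
    ((continuous_const.mul ((continuous_const.mul continuous_snd).rexp)).mul (hWc.pow 2))
  have hBqc : Continuous Bq := by
    apply Continuous.add
    apply Continuous.add
    · exact ((hccc.comp continuous_snd).mul hWc).pow 2
    · exact hLc.pow 2
    · exact (continuous_const.mul (hccc.comp continuous_snd)).mul
        (continuous_finset_sum _ fun i _ => (hBc i).pow 2)
  have hdGc : Continuous dG := by
    apply Continuous.add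
    apply Continuous.add
    · exact (continuous_const.mul (continuous_const.mul
        ((continuous_const.mul continuous_snd).rexp))).mul (hWc.pow 2)
    · exact (hccc.comp continuous_snd).mul ((continuous_const.mul hWc).mul hAc)
    · exact continuous_finset_sum _ fun i _ => (continuous_const.mul (hBc i)).mul (hTc i)
  have hF2c : Continuous F2 := by
    apply Continuous.pow
    exact (hAc.sub ((hccc.comp continuous_snd).mul hWc)).add hLc
  have hGWc : Continuous GW := by
    apply Continuous.add
    · exact (continuous_const.mul ((continuous_const.mul continuous_snd).rexp)).mul (hWc.pow 2)
    · exact continuous_finset_sum _ fun i _ => (hBc i).pow 2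
  have hDVc : ∀ i, Continuous (DV i) := by
    intro i
    apply Continuous.sub
    · exact continuous_const.mul (((hAvf i).continuous.mul (hBc i)).add
        (hAc.mul (hMc i i)))
    · exact (continuous_const.mul (hccc.comp continuous_snd)).mul
        (((hBc i).pow 2).add (hWc.mul (hMc i i)))
  have hswap : Continuous (fun q : ℝ × (Fin d → ℝ) => ((q.2 : Fin d → ℝ), (q.1 : ℝ))) :=
    continuous_snd.prodMk continuous_fst
  -- ## Product integrability
  have pm : Measure (ℝ × (Fin d → ℝ)) := ((volume.restrict (Ioo (0:ℝ) T)).prod volume)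
  have J1 : Integrable (fun q : ℝ × (Fin d → ℝ) => (A (q.2, q.1)) ^ 2)
      ((volume.restrict (Ioo (0:ℝ) T)).prod volume) := by
    apply integrable_prod_helper ((hAc.comp hswap).pow 2) hK₀
    intro t ht x hx
    simp [hZA t ht x hx]
  have J2 : Integrable (fun q : ℝ × (Fin d → ℝ) => q2 (q.2, q.1))
      ((volume.restrict (Ioo (0:ℝ) T)).prod volume) := by
    apply integrable_prod_helper (hq2c.comp hswap) hK₀
    intro t ht x hx
    simp [hq2def, hZW' t ht x hx]
  have J3 : Integrable (fun q : ℝ × (Fin d → ℝ) => Bq (q.2, q.1))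
      ((volume.restrict (Ioo (0:ℝ) T)).prod volume) := by
    apply integrable_prod_helper (hBqc.comp hswap) hK₀
    intro t ht x hx
    have hb : ∀ i : Fin d, Bf i (x, t) = 0 := fun i => hZB i t ht x hx
    simp [hBqdef, hZW' t ht x hx, hZL t ht x hx, hb]
  have J4 : Integrable (Function.uncurry (fun (t : ℝ) (x : Fin d → ℝ) => dG (x, t)))
      ((volume.restrict (Ioo (0:ℝ) T)).prod volume) := by
    apply integrable_prod_helper (by exact hdGc.comp hswap) hK₀
    intro t ht x hx
    have hb : ∀ i : Fin d, Bf i (x, t) = 0 := fun i => hZB i t ht x hx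
    show dG (x, t) = 0
    simp [hdGdef, hZW' t ht x hx, hb]
  have J5 : Integrable (fun q : ℝ × (Fin d → ℝ) => F2 (q.2, q.1))
      ((volume.restrict (Ioo (0:ℝ) T)).prod volume) := by
    apply integrable_prod_helper (hF2c.comp hswap) hK₀
    intro t ht x hx
    simp [hF2def, hZW' t ht x hx, hZA t ht x hx, hZL t ht x hx]
  -- ## Marginal integrability in `t`
  have mar1 : Integrable (fun t => ∫ x : Fin d → ℝ, (A (x, t)) ^ 2)
      (volume.restrict (Ioo (0:ℝ) T)) := J1.integral_prod_left
  have mar2 : Integrable (fun t => ∫ x : Fin d → ℝ, q2 (x, t))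
      (volume.restrict (Ioo (0:ℝ) T)) := J2.integral_prod_left
  have mar3 : Integrable (fun t => ∫ x : Fin d → ℝ, Bq (x, t))
      (volume.restrict (Ioo (0:ℝ) T)) := J3.integral_prod_left
  have mar4 : Integrable (fun t => ∫ x : Fin d → ℝ, dG (x, t))
      (volume.restrict (Ioo (0:ℝ) T)) := J4.integral_prod_left
  have mar5 : Integrable (fun t => ∫ x : Fin d → ℝ, F2 (x, t))
      (volume.restrict (Ioo (0:ℝ) T)) := J5.integral_prod_left
  -- ## Per-time-slice integrability in `x`
  have ia : ∀ t ∈ Ioo (0:ℝ) T, Integrable (fun x => (A (x, t)) ^ 2) volume := by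
    intro t ht
    refine integrable_slice ((cont_slice_x hAc t).pow 2) hK₀ (fun x hx => ?_)
    simp [hZA t ht x hx]
  have iq : ∀ t ∈ Ioo (0:ℝ) T, Integrable (fun x => q2 (x, t)) volume := by
    intro t ht
    refine integrable_slice (cont_slice_x hq2c t) hK₀ (fun x hx => ?_)
    simp [hq2def, hZW' t ht x hx]
  have iBq : ∀ t ∈ Ioo (0:ℝ) T, Integrable (fun x => Bq (x, t)) volume := by
    intro t ht
    refine integrable_slice (cont_slice_x hBqc t) hK₀ (fun x hx => ?_)
    have hb : ∀ i : Fin d, Bf i (x, t) = 0 := fun i => hZB i t ht x hx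
    simp [hBqdef, hZW' t ht x hx, hZL t ht x hx, hb]
  have idG : ∀ t ∈ Ioo (0:ℝ) T, Integrable (fun x => dG (x, t)) volume := by
    intro t ht
    refine integrable_slice (cont_slice_x hdGc t) hK₀ (fun x hx => ?_)
    have hb : ∀ i : Fin d, Bf i (x, t) = 0 := fun i => hZB i t ht x hx
    simp [hdGdef, hZW' t ht x hx, hb]
  -- the divergence term: it is the `DV` formula pointwise
  have idiv : ∀ t ∈ Ioo (0:ℝ) T,
      Integrable (fun x => ∑ i : Fin d, spd i (fun y => Vf i (y, t)) x) volume := by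
    intro t ht
    have hfe : (fun x => ∑ i : Fin d, spd i (fun y => Vf i (y, t)) x)
        = fun x => ∑ i : Fin d, DV i (x, t) := by
      funext x
      exact Finset.sum_congr rfl fun i _ => hVspd i x t
    rw [hfe]
    refine integrable_slice (continuous_finset_sum _ fun i _ => cont_slice_x (hDVc i) t) hK₀
      (fun x hx => ?_)
    refine Finset.sum_eq_zero fun i _ => ?_
    have hb := hZB i t ht x hx
    have hav := hZAv i t ht x hx
    have hm := hZM i i t ht x hx
    simp [hDVdef, hb, hav, hm, hZA t ht x hx, hZW' t ht x hx]
  -- the divergence term integrates to zero in `x`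
  have hdiv0 : ∀ t ∈ Ioo (0:ℝ) T,
      (∫ x : Fin d → ℝ, ∑ i : Fin d, spd i (fun y => Vf i (y, t)) x) = 0 := by
    intro t ht
    have hterm : ∀ i : Fin d, Integrable (fun x => spd i (fun y => Vf i (y, t)) x) volume := by
      intro i
      have hfe : (fun x => spd i (fun y => Vf i (y, t)) x) = fun x => DV i (x, t) :=
        funext fun x => hVspd i x t
      rw [hfe]
      refine integrable_slice (cont_slice_x (hDVc i) t) hK₀ (fun x hx => ?_)
      simp [hDVdef, hZB i t ht x hx, hZAv i t ht x hx, hZM i i t ht x hx,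
        hZA t ht x hx, hZW' t ht x hx]
    rw [integral_finset_sum _ (fun i _ => hterm i)]
    refine Finset.sum_eq_zero fun i _ => ?_
    refine integral_spd_eq_zero hK₀ (diff_slice_x (hVf i) t) (fun x hx => ?_) ?_
    · simp [hVdef, hZB i t ht x hx, hZA t ht x hx, hZW' t ht x hx]
    · have hfe : (fun x => fderiv ℝ (fun y => Vf i (y, t)) x (Pi.single i 1))
          = fun x => DV i (x, t) := funext fun x => hVspd i x t
      rw [hfe]
      exact cont_slice_x (hDVc i) t
  -- ## The spatial identity, integrated in `x`, for each time
  have hptid : ∀ t ∈ Ioo (0:ℝ) T,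
      (∫ x : Fin d → ℝ, F2 (x, t))
        = (∫ x : Fin d → ℝ, (A (x, t)) ^ 2) + (∫ x : Fin d → ℝ, q2 (x, t))
          + (∫ x : Fin d → ℝ, Bq (x, t)) - (∫ x : Fin d → ℝ, dG (x, t)) := by
    intro t ht
    have hfe : (fun x => F2 (x, t)) = fun x =>
        ((((A (x, t)) ^ 2 + q2 (x, t)) + Bq (x, t)) - dG (x, t))
          + ∑ i : Fin d, spd i (fun y => Vf i (y, t)) x := by
      funext x
      rw [PI x t]
    have h1 : Integrable (fun x => (A (x, t)) ^ 2 + q2 (x, t)) volume :=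
      (ia t ht).add (iq t ht)
    have h2 : Integrable (fun x => ((A (x, t)) ^ 2 + q2 (x, t)) + Bq (x, t)) volume :=
      h1.add (iBq t ht)
    have h3 : Integrable
        (fun x => (((A (x, t)) ^ 2 + q2 (x, t)) + Bq (x, t)) - dG (x, t)) volume :=
      h2.sub (idG t ht)
    rw [hfe, integral_add h3 (idiv t ht), integral_sub h2 (idG t ht), integral_add h1 (iBq t ht),
      integral_add (ia t ht) (iq t ht), hdiv0 t ht]
    ring
  have hBqnn : ∀ t ∈ Ioo (0:ℝ) T, 0 ≤ ∫ x : Fin d → ℝ, Bq (x, t) := by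
    intro t ht
    refine integral_nonneg fun x => ?_
    have hcc : 0 ≤ cc t := by
      have := (exp_pos (lam * t)).le
      positivity
    have : 0 ≤ ∑ i : Fin d, (Bf i (x, t)) ^ 2 :=
      Finset.sum_nonneg fun i _ => sq_nonneg _
    simp only [hBqdef]
    positivity
  -- ## Boundary integrability
  have ib : ∀ t ∈ Icc (0:ℝ) T, Integrable (fun x => GW (x, t)) volume := by
    intro t ht
    refine integrable_slice (cont_slice_x hGWc t) hK₀ fun x hx => ?_
    have hb : ∀ i : Fin d, Bf i (x, t) = 0 := fun i => hZBIcc i t ht x hx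
    simp [hGWdef, hZW t ht x hx, hb]
  -- ## FTC in time
  have hGd : ∀ (x : Fin d → ℝ) (t : ℝ), HasDerivAt (fun τ => GW (x, τ)) (dG (x, t)) t := by
    intro x t
    have hr : HasDerivAt (fun τ : ℝ => rexp (lam * τ)) (rexp (lam * t) * lam) t := by
      have h1 : HasDerivAt (fun τ : ℝ => lam * τ) lam t := by
        simpa using (hasDerivAt_id t).const_mul lam
      exact h1.exp
    have hWs : HasDerivAt (fun τ => W (x, τ)) (A (x, t)) t :=
      hasDerivAt_slice_t (hW.differentiable (by simp) (x, t))
    have hBs : ∀ i : Fin d, HasDerivAt (fun τ => Bf i (x, τ)) (Tf i (x, t)) t :=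
      fun i => hasDerivAt_slice_t ((hBf i).differentiable (by simp) (x, t))
    have h1 : HasDerivAt (fun τ => s * lam * rexp (lam * τ) * (W (x, τ)) ^ 2)
        ((s * lam) * (rexp (lam * t) * lam) * (W (x, t)) ^ 2
          + s * lam * rexp (lam * t) * ((2 : ℕ) * (W (x, t)) ^ 1 * A (x, t))) t :=
      (hr.const_mul (s * lam)).mul (hWs.pow 2)
    have h2 : HasDerivAt (fun τ => ∑ i : Fin d, (Bf i (x, τ)) ^ 2)
        (∑ i : Fin d, (2 : ℕ) * (Bf i (x, t)) ^ 1 * Tf i (x, t)) t :=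
      HasDerivAt.fun_sum fun i _ => (hBs i).pow 2
    have htot := h1.fun_add h2
    refine htot.congr_deriv ?_
    simp only [hdGdef, hccdef, pow_one, Nat.cast_ofNat]
    ring
  have hdGsc : ∀ x : Fin d → ℝ, Continuous (fun τ => dG (x, τ)) :=
    fun x => hdGc.comp (continuous_const.prodMk continuous_id)
  have ftcx : ∀ x : Fin d → ℝ, ∫ t in Ioo (0:ℝ) T, dG (x, t) = GW (x, T) - GW (x, 0) :=
    fun x => ftc_Ioo (hGd x) (hdGsc x) hT
  have key2 : (∫ t in Ioo (0:ℝ) T, ∫ x : Fin d → ℝ, dG (x, t))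
      = (∫ x : Fin d → ℝ, GW (x, T)) - (∫ x : Fin d → ℝ, GW (x, 0)) := by
    rw [integral_integral_swap (f := fun (t : ℝ) (x : Fin d → ℝ) => dG (x, t)) J4]
    have hfe : (fun x : Fin d → ℝ => ∫ t in Ioo (0:ℝ) T, dG (x, t))
        = fun x => GW (x, T) - GW (x, 0) := funext ftcx
    rw [hfe, integral_sub (ib T (right_mem_Icc.2 hT.le)) (ib 0 (left_mem_Icc.2 hT.le))]
  -- ## Main inequality chain
  have key1 : (∫ t in Ioo (0:ℝ) T, ∫ x : Fin d → ℝ, F2 (x, t))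
      - (∫ t in Ioo (0:ℝ) T, ∫ x : Fin d → ℝ, (A (x, t)) ^ 2)
      - (∫ t in Ioo (0:ℝ) T, ∫ x : Fin d → ℝ, q2 (x, t))
      ≥ - (∫ t in Ioo (0:ℝ) T, ∫ x : Fin d → ℝ, dG (x, t)) := by
    have hsub1 : Integrable (fun t => (∫ x : Fin d → ℝ, F2 (x, t))
        - ∫ x : Fin d → ℝ, (A (x, t)) ^ 2) (volume.restrict (Ioo (0:ℝ) T)) := mar5.sub mar1
    have step : (∫ t in Ioo (0:ℝ) T, ∫ x : Fin d → ℝ, F2 (x, t))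
        - (∫ t in Ioo (0:ℝ) T, ∫ x : Fin d → ℝ, (A (x, t)) ^ 2)
        - (∫ t in Ioo (0:ℝ) T, ∫ x : Fin d → ℝ, q2 (x, t))
        = ∫ t in Ioo (0:ℝ) T, ((∫ x : Fin d → ℝ, F2 (x, t))
            - (∫ x : Fin d → ℝ, (A (x, t)) ^ 2) - (∫ x : Fin d → ℝ, q2 (x, t))) := by
      rw [integral_sub hsub1 mar2, integral_sub mar5 mar1]
    rw [step, ge_iff_le, ← integral_neg]
    refine setIntegral_mono_on mar4.neg (hsub1.sub mar2) measurableSet_Ioo fun t ht => ?_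
    have := hptid t ht
    have := hBqnn t ht
    linarith
  -- ## Rewrite the goal in terms of the auxiliary functions
  simp only [l1, l3, l5, lw]
  have e2 : (∫ t in Ioo (0:ℝ) T, ∫ x : Fin d → ℝ, s * lam ^ 2 * rexp (lam * t) * (W (x, t)) ^ 2)
      = ∫ t in Ioo (0:ℝ) T, ∫ x : Fin d → ℝ, q2 (x, t) := rfl
  have e0 : (∫ x : Fin d → ℝ, (s * lam * (W (x, 0)) ^ 2 + ∑ i : Fin d, (Bf i (x, 0)) ^ 2))
      = ∫ x : Fin d → ℝ, GW (x, 0) := by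
    congr 1
    funext x
    simp [hGWdef]
  have eT : (∫ x : Fin d → ℝ,
        (s * lam * rexp (lam * T) * (W (x, T)) ^ 2 + ∑ i : Fin d, (Bf i (x, T)) ^ 2))
      = ∫ x : Fin d → ℝ, GW (x, T) := rfl
  rw [e2, e0, eT]
  linarith [key1, key2]
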